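/- Let x ∈ (Z_d)^N, and enumerate the orbit of x under cyclic shifts as distinct tuples (i_1^{(j)},...,i_N^{(j)}), j ∈ Z_k. Then the truncated (N-1)-tuples (i_2^{(j)},...,i_N^{(j)}), j ∈ Z_k, are pairwise distinct. -/

import Mathlib

open Fin.NatCast in
/-- Enumerate the orbit of a tuple x ∈ (Z_d)^{N+1} under cyclic shifts as
distinct tuples f 0, ..., f (k-1).  Then deleting the first coordinate of each
orbit element still yields pairwise distinct N-tuples. -/
theorem stmt5 (d N k : ℕ) [NeZero d] (hd : 2 ≤ d) (hN : 1 ≤ N)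
    (x : Fin (N + 1) → Fin d)
    (f : Fin k → (Fin (N + 1) → Fin d))
    (hinj : Function.Injective f)
    (horb : ∀ j, ∃ r : ℕ, f j = fun i => x (i + (r : Fin (N + 1))))
    (hall : ∀ r : ℕ, ∃ j, f j = fun i => x (i + (r : Fin (N + 1)))) :
    Function.Injective (fun j : Fin k => fun i : Fin N => f j i.succ) := by
  intro j1 j2 hEq
  obtain ⟨r1, h1⟩ := horb j1
  obtain ⟨r2, h2⟩ := horb j2
  set a : Fin (N + 1) := (r1 : Fin (N + 1)) with ha
  set b : Fin (N + 1) := (r2 : Fin (N + 1)) with hb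
  set s : Fin (N + 1) := b - a with hs
  -- the truncated equality: for all t ≠ a, x t = x (t + s)
  have hx : ∀ t : Fin (N + 1), t ≠ a → x t = x (t + s) := by
    intro t ht
    have htne : t - a ≠ 0 := sub_ne_zero.mpr ht
    set i : Fin N := (t - a).pred htne with hi
    have hsucc : i.succ = t - a := Fin.succ_pred _ _
    have := congrFun hEq i
    simp only [h1, h2] at this
    rw [hsucc] at this
    have e1 : t - a + a = t := sub_add_cancel t a
    have e2 : t - a + b = t + s := by rw [hs]; abel
    rw [e1, e2] at this
    exact this
  -- chain around the cycle
  have chain : ∀ n : ℕ, x (a + (n + 1) • s) = x (a + s) := by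
    intro n
    induction n with
    | zero => simp
    | succ n ih =>
      by_cases hc : a + (n + 1) • s = a
      · have : a + (n + 1 + 1) • s = a + s := by
          have : a + (n + 1 + 1) • s = (a + (n + 1) • s) + s := by
            rw [succ_nsmul]; abel
          rw [this, hc]
        rw [this]
      · have h3 := hx _ hc
        have : a + (n + 1) • s + s = a + (n + 1 + 1) • s := by
          rw [succ_nsmul _ (n + 1)]; abel
        rw [this] at h3
        rw [← h3, ih]
  have hcard : (N + 1) • s = 0 := by
    have := card_nsmul_eq_zero (G := Fin (N + 1)) (x := s)
    simpa using this
  have hkey : ∀ t : Fin (N + 1), x t = x (t + s) := by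
    intro t
    by_cases ht : t = a
    · subst ht
      have := chain N
      rw [hcard, add_zero] at this
      exact this
    · exact hx t ht
  have hfeq : f j1 = f j2 := by
    funext i
    rw [h1, h2]
    have e : (i : Fin (N + 1)) + a + s = i + b := by rw [hs]; abel
    calc x (i + a) = x (i + a + s) := hkey _
      _ = x (i + b) := by rw [e]
  exact hinj hfeq
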